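/- A bilinear map Φ : ℝ^d × (ℝ^d ⊗ (ℝ^d)^*) → ℝ^d (equivalently Φ : ℝ^d × M_d(ℝ) → ℝ^d, linear in each argument) satisfying Φ(AV, AMA⁻¹) = A Φ(V,M) for all A ∈ GL(d,ℝ), provided d ≥ 2, is of the form Φ(V,M) = λ·MV + μ·(tr M)·V for some real scalars λ, μ. -/

import Mathlib

open Matrix

namespace EquivAux

variable {d : ℕ}

/-- Permutation matrix. -/
def permM (σ : Equiv.Perm (Fin d)) : Matrix (Fin d) (Fin d) ℝ :=
  Matrix.of fun x y => if x = σ y then 1 else 0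

lemma permM_mul (σ τ : Equiv.Perm (Fin d)) : permM σ * permM τ = permM (σ * τ) := by
  ext x y
  rw [mul_apply, Finset.sum_eq_single (τ y)]
  · simp [permM]; congr
  · intro m _ hm; simp [permM, hm]
  · simp

lemma permM_one : permM (1 : Equiv.Perm (Fin d)) = 1 := by
  ext x y; simp [permM, Matrix.one_apply]; congr

noncomputable def permGL (σ : Equiv.Perm (Fin d)) : GL (Fin d) ℝ :=
  ⟨permM σ, permM σ⁻¹,
    by rw [permM_mul, mul_inv_cancel, permM_one],
    by rw [permM_mul, inv_mul_cancel, permM_one]⟩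

lemma permM_mulVec (σ : Equiv.Perm (Fin d)) (v : Fin d → ℝ) :
    (permM σ) *ᵥ v = fun x => v (σ⁻¹ x) := by
  ext x
  rw [mulVec, dotProduct, Finset.sum_eq_single (σ⁻¹ x)]
  · simp [permM]
  · intro m _ hm
    have : x ≠ σ m := by
      intro h; apply hm; rw [h]; simp
    simp [permM, this]
  · simp

lemma permM_mul_apply (σ : Equiv.Perm (Fin d)) (M : Matrix (Fin d) (Fin d) ℝ) (x y : Fin d) :
    (permM σ * M) x y = M (σ⁻¹ x) y := by
  rw [mul_apply, Finset.sum_eq_single (σ⁻¹ x)]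
  · simp [permM]
  · intro m _ hm
    have : x ≠ σ m := by intro h; apply hm; rw [h]; simp
    simp [permM, this]
  · simp

lemma mul_permM_apply (σ : Equiv.Perm (Fin d)) (M : Matrix (Fin d) (Fin d) ℝ) (x y : Fin d) :
    (M * permM σ) x y = M x (σ y) := by
  rw [mul_apply, Finset.sum_eq_single (σ y)]
  · simp [permM]
  · intro m _ hm; simp [permM, hm]
  · simp

lemma permM_conj_std (σ : Equiv.Perm (Fin d)) (j k : Fin d) :
    permM σ * Matrix.single j k (1:ℝ) * permM σ⁻¹ = Matrix.single (σ j) (σ k) 1 := by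
  ext x y
  rw [mul_permM_apply, permM_mul_apply]
  simp only [Matrix.single, Matrix.of_apply]
  congr 1
  simp [Equiv.eq_symm_apply, Equiv.Perm.inv_def, eq_comm]

lemma permM_mulVec_single (σ : Equiv.Perm (Fin d)) (i : Fin d) :
    (permM σ) *ᵥ (Pi.single i (1:ℝ)) = Pi.single (σ i) 1 := by
  rw [permM_mulVec]
  ext x
  simp only [Pi.single_apply, Equiv.Perm.inv_def]
  rcases eq_or_ne x (σ i) with h | h
  · subst h; simp
  · rw [if_neg (by intro h2; apply h; rw [← h2]; simp), if_neg h]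

noncomputable def diagGL (t : Fin d → ℝ) (ht : ∀ m, t m ≠ 0) : GL (Fin d) ℝ :=
  ⟨diagonal t, diagonal fun m => (t m)⁻¹,
    by rw [diagonal_mul_diagonal]
       have : (fun i => t i * (t i)⁻¹) = fun _ => (1:ℝ) := funext fun i => mul_inv_cancel₀ (ht i)
       rw [this, diagonal_one],
    by rw [diagonal_mul_diagonal]
       have : (fun i => (t i)⁻¹ * t i) = fun _ => (1:ℝ) := funext fun i => inv_mul_cancel₀ (ht i)
       rw [this, diagonal_one]⟩

lemma diag_conj_std (t : Fin d → ℝ) (j k : Fin d) :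
    diagonal t * Matrix.single j k (1:ℝ) * diagonal (fun m => (t m)⁻¹) =
      (t j * (t k)⁻¹) • Matrix.single j k 1 := by
  ext x y
  rw [mul_diagonal, diagonal_mul, Matrix.smul_apply]
  by_cases h1 : j = x
  · by_cases h2 : k = y
    · subst h1; subst h2; simp [mul_comm]
    · simp [h2]
  · simp [h1]

end EquivAux
open EquivAux in
/-- A bilinear map `Φ : ℝ^d × M_d(ℝ) → ℝ^d` which is `GL(d,ℝ)`-equivariant
(`Φ(AV, A M A⁻¹) = A Φ(V, M)`), with `d ≥ 2`, is of the form
`Φ(V,M) = λ • M V + μ (tr M) • V`. -/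
theorem equivariant_bilinear_vector_matrix (d : ℕ) (hd : 2 ≤ d)
    (Φ : (Fin d → ℝ) →ₗ[ℝ] Matrix (Fin d) (Fin d) ℝ →ₗ[ℝ] (Fin d → ℝ))
    (hΦ : ∀ (A : GL (Fin d) ℝ) (v : Fin d → ℝ) (M : Matrix (Fin d) (Fin d) ℝ),
      Φ ((A : Matrix (Fin d) (Fin d) ℝ).mulVec v)
          ((A : Matrix (Fin d) (Fin d) ℝ) * M * ((A⁻¹ : GL (Fin d) ℝ) : Matrix (Fin d) (Fin d) ℝ))
        = (A : Matrix (Fin d) (Fin d) ℝ).mulVec (Φ v M)) :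
    ∃ lam mu : ℝ, ∀ (v : Fin d → ℝ) (M : Matrix (Fin d) (Fin d) ℝ),
      Φ v M = lam • M.mulVec v + (mu * M.trace) • v := by
  classical
  -- consequence of equivariance under diagonal matrices
  have hdiag : ∀ i j k l p : Fin d, (Φ (Pi.single i 1) (Matrix.single j k 1)) l ≠ 0 →
      (if i = p then (2:ℝ) else 1) * (if j = p then 2 else 1)
        = (if k = p then 2 else 1) * (if l = p then 2 else 1) := by
    intro i j k l p hF
    set t : Fin d → ℝ := fun m => if m = p then 2 else 1 with ht
    have htne : ∀ m, t m ≠ 0 := by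
      intro m; rw [ht]; dsimp only; split <;> norm_num
    have h := hΦ (diagGL t htne) (Pi.single i 1) (Matrix.single j k 1)
    have hc1 : ((diagGL t htne : GL (Fin d) ℝ) : Matrix (Fin d) (Fin d) ℝ) = diagonal t := rfl
    have hc2 : (((diagGL t htne)⁻¹ : GL (Fin d) ℝ) : Matrix (Fin d) (Fin d) ℝ)
        = diagonal fun m => (t m)⁻¹ := rfl
    rw [hc1, hc2, diag_conj_std] at h
    have hv : diagonal t *ᵥ (Pi.single i (1:ℝ)) = t i • (Pi.single i 1 : Fin d → ℝ) := by
      rw [diagonal_mulVec_single]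
      ext m
      simp only [Pi.single_apply, Pi.smul_apply, smul_eq_mul]
      split <;> simp
    rw [hv, _root_.map_smul, _root_.map_smul, LinearMap.smul_apply] at h
    have h2 := congrFun h l
    rw [mulVec_diagonal] at h2
    simp only [Pi.smul_apply, smul_eq_mul] at h2
    set F := Φ (Pi.single i 1) (Matrix.single j k 1) l with hFdef
    have hk := htne k
    have hck : t k * (t k)⁻¹ = 1 := mul_inv_cancel₀ hk
    have key : (t i * t j) * F = (t k * t l) * F := by
      calc (t i * t j) * F = (t k * (t k)⁻¹) * ((t i * t j) * F) := by rw [hck, one_mul]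
        _ = t k * (t j * (t k)⁻¹ * (t i * F)) := by ring
        _ = t k * (t l * F) := by rw [h2]
        _ = (t k * t l) * F := by ring
    have h3 := mul_right_cancel₀ hF key
    simpa only [ht] using h3
  -- vanishing of off-pattern coefficients
  have hzero : ∀ i j k l : Fin d, ¬(k = i ∧ l = j) → ¬(k = j ∧ l = i) →
      (Φ (Pi.single i 1) (Matrix.single j k 1)) l = 0 := by
    intro i j k l h1 h2
    by_contra hF
    have H := fun p => hdiag i j k l p hF
    rcases eq_or_ne k i with hki | hki
    · have hlj : l ≠ j := fun h => h1 ⟨hki, h⟩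
      have Hl := H l
      rw [hki] at Hl
      rcases eq_or_ne i l with hil | hil
      · rw [if_pos hil, if_neg (Ne.symm hlj), if_pos rfl] at Hl
        norm_num at Hl
      · rw [if_neg hil, if_neg (Ne.symm hlj), if_pos rfl] at Hl
        norm_num at Hl
    · rcases eq_or_ne k j with hkj | hkj
      · have hli : l ≠ i := fun h => h2 ⟨hkj, h⟩
        have Hi := H i
        rw [if_pos rfl, if_neg hki, if_neg hli,
          if_neg (fun h : j = i => hki (hkj.trans h))] at Hi
        norm_num at Hi
      · have Hk := H k
        rw [if_pos rfl, if_neg (Ne.symm hki), if_neg (Ne.symm hkj)] at Hk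
        rcases eq_or_ne l k with hlk | hlk
        · rw [if_pos hlk] at Hk; norm_num at Hk
        · rw [if_neg hlk] at Hk; norm_num at Hk
  -- equivariance under permutations
  have hperm : ∀ (σ : Equiv.Perm (Fin d)) (i j k l : Fin d),
      (Φ (Pi.single (σ i) 1) (Matrix.single (σ j) (σ k) 1)) (σ l)
        = (Φ (Pi.single i 1) (Matrix.single j k 1)) l := by
    intro σ i j k l
    have h := hΦ (permGL σ) (Pi.single i 1) (Matrix.single j k 1)
    have hc1 : ((permGL σ : GL (Fin d) ℝ) : Matrix (Fin d) (Fin d) ℝ) = permM σ := rfl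
    have hc2 : (((permGL σ)⁻¹ : GL (Fin d) ℝ) : Matrix (Fin d) (Fin d) ℝ) = permM σ⁻¹ := rfl
    rw [hc1, hc2, permM_conj_std, permM_mulVec_single, permM_mulVec] at h
    have h2 := congrFun h (σ l)
    simpa using h2
  -- the two distinguished indices
  have h0d : 0 < d := by omega
  have h1d : 1 < d := by omega
  set i0 : Fin d := ⟨0, h0d⟩ with hi0
  set i1 : Fin d := ⟨1, h1d⟩ with hi1
  have h01 : i0 ≠ i1 := by simp [hi0, hi1, Fin.ext_iff]
  -- permutations moving (i1, i0) to any pair of distinct indices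
  have hsig : ∀ x y : Fin d, x ≠ y →
      ∃ σ : Equiv.Perm (Fin d), σ i1 = x ∧ σ i0 = y := by
    intro x y hxy
    have hm : (Equiv.swap i1 x) i0 ≠ x := by
      intro h
      rw [show x = (Equiv.swap i1 x) i1 from (Equiv.swap_apply_left i1 x).symm] at h
      exact h01 ((Equiv.swap i1 x).injective h)
    refine ⟨(Equiv.swap i1 x).trans (Equiv.swap ((Equiv.swap i1 x) i0) y), ?_, ?_⟩
    · rw [Equiv.trans_apply, Equiv.swap_apply_left,
        Equiv.swap_apply_of_ne_of_ne (Ne.symm hm) hxy]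
    · rw [Equiv.trans_apply, Equiv.swap_apply_left]
  -- the two scalars
  set lam : ℝ := Φ (Pi.single i1 1) (Matrix.single i0 i1 1) i0 with hlam
  set mu : ℝ := Φ (Pi.single i0 1) (Matrix.single i1 i1 1) i0 with hmu
  set c : ℝ := Φ (Pi.single i1 1) (Matrix.single i1 i1 1) i1 with hc
  -- the shear relation lam + mu = c
  have hshear : lam + mu = c := by
    set S : Matrix (Fin d) (Fin d) ℝ := Matrix.single i0 i1 1 with hS
    have hSS : S * S = 0 := by
      rw [hS]; exact Matrix.single_mul_single_of_ne (h := Ne.symm h01) ..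
    have hinv1 : (1 + S) * (1 - S) = 1 := by
      rw [mul_sub, add_mul, add_mul, one_mul, mul_one, one_mul, hSS]
      abel
    have hinv2 : (1 - S) * (1 + S) = 1 := by
      rw [mul_add, sub_mul, sub_mul, one_mul, mul_one, one_mul, hSS]
      abel
    set A : GL (Fin d) ℝ := ⟨1 + S, 1 - S, hinv1, hinv2⟩ with hA
    have h := hΦ A (Pi.single i1 1) (Matrix.single i1 i1 1)
    have hcA1 : ((A : GL (Fin d) ℝ) : Matrix (Fin d) (Fin d) ℝ) = 1 + S := rfl
    have hcA2 : ((A⁻¹ : GL (Fin d) ℝ) : Matrix (Fin d) (Fin d) ℝ) = 1 - S := rfl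
    rw [hcA1, hcA2] at h
    have e1 : (1 + S) * Matrix.single i1 i1 1 = Matrix.single i1 i1 1 + S := by
      rw [add_mul, one_mul, hS, Matrix.single_mul_single_same, mul_one]
    have e2 : Matrix.single i1 i1 (1:ℝ) * S = 0 := by
      rw [hS]; exact Matrix.single_mul_single_of_ne (h := Ne.symm h01) ..
    have hconj : (1 + S) * Matrix.single i1 i1 1 * (1 - S)
        = Matrix.single i1 i1 1 + S := by
      rw [e1, mul_sub, mul_one, add_mul, e2, hSS]
      abel
    have hvec : (1 + S) *ᵥ (Pi.single i1 (1:ℝ)) = Pi.single i1 1 + Pi.single i0 1 := by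
      rw [add_mulVec, one_mulVec, hS, Matrix.single_mulVec]
      congr 1
      ext m
      simp [Function.update_apply, Pi.single_apply]
    rw [hconj, hvec] at h
    have h2 := congrFun h i0
    rw [hS] at h2
    simp only [map_add, LinearMap.add_apply, Pi.add_apply] at h2
    rw [add_mulVec, one_mulVec, Matrix.single_mulVec] at h2
    simp only [Pi.add_apply, Function.update_self, one_mul] at h2
    have hz : Φ (Pi.single i0 1) (Matrix.single i0 i1 1) i0 = 0 := by
      apply hzero
      · exact fun h => h01 h.1.symm
      · exact fun h => h01 h.1.symm
    rw [hlam, hmu, hc]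
    linarith [h2, hz]
  -- trace and mulVec of basis matrices
  have htr : ∀ j k : Fin d, (Matrix.single j k (1:ℝ)).trace = if j = k then 1 else 0 := by
    intro j k
    rcases eq_or_ne j k with rfl | h
    · rw [if_pos rfl, Matrix.trace]
      simp [Matrix.diag_apply, Matrix.single]
    · rw [if_neg h, Matrix.trace]
      apply Finset.sum_eq_zero
      intro m _
      rw [Matrix.diag_apply]
      apply Matrix.single_apply_of_ne
      rintro ⟨rfl, h2⟩
      exact h h2.symm
  have hmv : ∀ i j k : Fin d,
      (Matrix.single j k (1:ℝ)) *ᵥ Pi.single i 1 = if k = i then Pi.single j 1 else 0 := by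
    intro i j k
    rw [Matrix.single_mulVec]
    rcases eq_or_ne k i with rfl | h
    · rw [if_pos rfl]
      ext m
      simp [Function.update_apply, Pi.single_apply]
    · rw [if_neg h]
      ext m
      simp [Function.update_apply, Pi.single_eq_of_ne h]
  -- the main computation on basis vectors
  have hbasis : ∀ i j k : Fin d, Φ (Pi.single i 1) (Matrix.single j k 1)
      = lam • ((Matrix.single j k (1:ℝ)) *ᵥ (Pi.single i 1 : Fin d → ℝ))
        + (mu * (Matrix.single j k (1:ℝ)).trace) • (Pi.single i 1 : Fin d → ℝ) := by
    intro i j k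
    funext l
    rw [Pi.add_apply, Pi.smul_apply, Pi.smul_apply, smul_eq_mul, smul_eq_mul, hmv, htr]
    rcases eq_or_ne k i with hki | hki
    · rcases eq_or_ne l j with hlj | hlj
      · rcases eq_or_ne j i with hji | hji
        · -- all indices equal
          rw [hlj, hji, hki]
          simp only [if_pos rfl, Pi.single_eq_same, mul_one]
          have hp := hperm (Equiv.swap i1 i) i1 i1 i1 i1
          rw [Equiv.swap_apply_left] at hp
          rw [hp, ← hc, ← hshear]
          simp
        · -- k = i, l = j, j ≠ i
          rw [hlj, hki]
          simp only [if_pos rfl, if_neg hji, Pi.single_eq_same, mul_one, mul_zero, zero_mul,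
            add_zero]
          obtain ⟨σ, h1, h0⟩ := hsig i j (Ne.symm hji)
          have hp := hperm σ i1 i0 i1 i0
          rw [h1, h0] at hp
          rw [hp, ← hlam]
          simp
      · -- k = i, l ≠ j
        rw [hki]
        have hz := hzero i j i l (fun h => hlj h.2) (fun h => hlj (h.2.trans h.1))
        rw [hz]
        rcases eq_or_ne j i with hji | hji
        · have hli : l ≠ i := fun h => hlj (h.trans hji.symm)
          simp [hji, Pi.single_apply, hlj, hli]
        · simp [hji, Pi.single_apply, hlj]
    · rw [if_neg hki]
      rcases eq_or_ne j k with hjk | hjk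
      · rcases eq_or_ne l i with hli | hli
        · -- j = k ≠ i, l = i
          rw [hjk, hli]
          simp only [if_pos rfl, Pi.single_eq_same, Pi.zero_apply, mul_zero, mul_one, zero_add]
          obtain ⟨σ, h1, h0⟩ := hsig k i hki
          have hp := hperm σ i0 i1 i1 i0
          rw [h1, h0] at hp
          rw [hp, ← hmu]
          simp
        · rw [hjk]
          have hz := hzero i k k l (fun h => hki h.1) (fun h => hli h.2)
          rw [hz]
          simp [Pi.single_apply, hli]
      · have hz := hzero i j k l (fun h => hki h.1) (fun h => hjk h.1.symm)
        rw [hz]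
        simp [hjk]
  -- assemble: define the model bilinear map and use basis extensionality
  set Ψ : (Fin d → ℝ) →ₗ[ℝ] Matrix (Fin d) (Fin d) ℝ →ₗ[ℝ] (Fin d → ℝ) :=
    LinearMap.mk₂ ℝ (fun v M => lam • M.mulVec v + (mu * M.trace) • v)
      (by
        intro v w M
        funext l
        simp only [Matrix.mulVec_add, Pi.add_apply, Pi.smul_apply, smul_eq_mul]
        ring)
      (by
        intro cc v M
        funext l
        simp only [Matrix.mulVec_smul, Pi.add_apply, Pi.smul_apply, smul_eq_mul]
        ring)
      (by
        intro v M N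
        funext l
        simp only [Matrix.add_mulVec, Matrix.trace_add, Pi.add_apply, Pi.smul_apply,
          smul_eq_mul]
        ring)
      (by
        intro cc v M
        funext l
        simp only [Matrix.smul_mulVec, Matrix.trace_smul, Pi.add_apply, Pi.smul_apply,
          smul_eq_mul]
        ring) with hΨ
  have hΦΨ : Φ = Ψ := by
    apply (Pi.basisFun ℝ (Fin d)).ext
    intro i
    apply (Matrix.stdBasis ℝ (Fin d) (Fin d)).ext
    intro jk
    obtain ⟨j, k⟩ := jk
    rw [Pi.basisFun_apply, Matrix.stdBasis_eq_single, hbasis i j k, hΨ,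
      LinearMap.mk₂_apply]
  refine ⟨lam, mu, fun v M => ?_⟩
  rw [hΦΨ, hΨ, LinearMap.mk₂_apply]
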